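/- Let 0 < α ≤ 1 and let n_0 = (12/α²)·log(6/α²). Let G be a graph on n ≥ n_0 vertices. If there exists a vertex x ∈ V(G) such that every vertex v ∈ V(G) satisfies deg(v, N(x)) ≥ α·n, then G has a spanning tree with at least n − (2/α)·log(n) leaves. -/

import Mathlib

open SimpleGraph

private lemma tree_of_parent {V : Type*} [Fintype V] (G : SimpleGraph V) (x : V)
    (S : Finset V) (hSadj : ∀ s ∈ S, G.Adj x s)
    (hcov : ∀ v, v ≠ x → v ∉ S → ∃ s ∈ S, G.Adj s v) :
    ∃ T : SimpleGraph V, T ≤ G ∧ T.IsTree ∧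
      ∀ v, v ≠ x → v ∉ S → {w | T.Adj v w}.ncard = 1 := by
  classical
  have hxS : x ∉ S := fun h => G.loopless.irrefl x (hSadj x h)
  let p : V → V := fun v =>
    if hv : v ≠ x ∧ v ∉ S then (hcov v hv.1 hv.2).choose else x
  have hp_mem : ∀ v, v ≠ x → v ∉ S → p v ∈ S ∧ G.Adj (p v) v := by
    intro v hv1 hv2
    have h := (hcov v hv1 hv2).choose_spec
    simp only [p, dif_pos (And.intro hv1 hv2)]
    exact ⟨h.1, h.2⟩
  have hpS : ∀ v ∈ S, p v = x := by
    intro v hv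
    have h : ¬ (v ≠ x ∧ v ∉ S) := fun h => h.2 hv
    simp [p, h]
  have hpadj : ∀ v, v ≠ x → G.Adj (p v) v := by
    intro v hv
    by_cases hvS : v ∈ S
    · rw [hpS v hvS]; exact hSadj v hvS
    · exact (hp_mem v hv hvS).2
  let r : V → ℕ := fun v => if v = x then 0 else if v ∈ S then 1 else 2
  have hr2 : ∀ v, r v ≤ 2 := by
    intro v; simp only [r]
    split
    · omega
    · split <;> omega
  have hrpos : ∀ v, v ≠ x → 1 ≤ r v := by
    intro v hv; simp only [r, if_neg hv]
    split <;> omega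
  have hpr : ∀ v, v ≠ x → r (p v) < r v := by
    intro v hv
    by_cases hvS : v ∈ S
    · rw [hpS v hvS]
      simp [r, hv, hvS, hxS]
    · have hm := (hp_mem v hv hvS).1
      have hpx : p v ≠ x := fun h => hxS (h ▸ hm)
      simp [r, hv, hvS, hpx, hm]
  let T : SimpleGraph V :=
    { Adj := fun a b => (a ≠ x ∧ p a = b) ∨ (b ≠ x ∧ p b = a)
      symm := ⟨fun a b h => h.symm⟩
      loopless := by
        constructor; intro a h
        rcases h with ⟨ha, hpa⟩ | ⟨ha, hpa⟩ <;>
          exact G.loopless.irrefl a (by simpa [hpa] using hpadj a ha) }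
  have hTadj : ∀ a b : V, T.Adj a b ↔ ((a ≠ x ∧ p a = b) ∨ (b ≠ x ∧ p b = a)) :=
    fun a b => Iff.rfl
  have hTG : T ≤ G := by
    intro a b h
    rcases h with ⟨ha, rfl⟩ | ⟨hb, hpb⟩
    · exact (hpadj a ha).symm
    · exact hpb ▸ (hpadj b hb)
  have hreach : ∀ v, T.Reachable v x := by
    have key : ∀ m : ℕ, ∀ v, r v ≤ m → T.Reachable v x := by
      intro m
      induction m with
      | zero =>
        intro v hv
        by_cases h : v = x
        · subst h; exact Reachable.refl _
        · exact absurd hv (by have := hrpos v h; omega)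
      | succ m ih =>
        intro v hv
        by_cases h : v = x
        · subst h; exact Reachable.refl _
        · have hadj : T.Adj v (p v) := Or.inl ⟨h, rfl⟩
          have hlt := hpr v h
          exact hadj.reachable.trans (ih (p v) (by omega))
    exact fun v => key (r v) v le_rfl
  have hconn : T.Connected := by
    haveI : Nonempty V := ⟨x⟩
    exact ⟨fun a b => (hreach a).trans (hreach b).symm⟩
  have hmaxadj : ∀ u a : V, T.Adj u a → r a ≤ r u → p u = a := by
    intro u a h hr
    rcases h with ⟨_, h⟩ | ⟨ha, h⟩
    · exact h
    · have := hpr a ha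
      rw [h] at this
      omega
  have hacyc : T.IsAcyclic := by
    intro v c hc
    have hsupp : c.support.toFinset.Nonempty :=
      ⟨v, List.mem_toFinset.mpr c.start_mem_support⟩
    obtain ⟨u, huc, hmax⟩ := Finset.exists_max_image c.support.toFinset r hsupp
    rw [List.mem_toFinset] at huc
    have hmax' : ∀ a ∈ c.support, r a ≤ r u :=
      fun a ha => hmax a (List.mem_toFinset.mpr ha)
    have hcyc' : (c.rotate u huc).IsCycle := hc.rotate huc
    have hsub : ∀ a ∈ (c.rotate u huc).support, a ∈ c.support := by
      intro a ha
      rcases (SimpleGraph.Walk.mem_support_iff (c.rotate u huc)).mp ha with rfl | ha'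
      · exact huc
      · have hperm := (SimpleGraph.Walk.support_rotate c u huc).perm
        exact List.mem_of_mem_tail (hperm.mem_iff.mp ha')
    have hnn : ¬ (c.rotate u huc).Nil := hcyc'.not_nil
    obtain ⟨b, hub, q, hq⟩ := SimpleGraph.Walk.not_nil_iff.mp hnn
    rw [hq] at hcyc'
    obtain ⟨hqpath, hnedge⟩ := (SimpleGraph.Walk.cons_isCycle_iff q hub).mp hcyc'
    have hqsub : ∀ a ∈ q.support, a ∈ c.support := by
      intro a ha
      apply hsub
      rw [hq, SimpleGraph.Walk.support_cons]
      exact List.mem_cons_of_mem _ ha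
    have hbne : b ≠ u := hub.ne'
    have hqrnn : ¬ q.reverse.Nil := SimpleGraph.Walk.not_nil_of_ne hbne.symm
    obtain ⟨a, hua, q2, hq2⟩ := SimpleGraph.Walk.not_nil_iff.mp hqrnn
    have haq : a ∈ q.support := by
      have h1 : a ∈ q.reverse.support := by
        rw [hq2, SimpleGraph.Walk.support_cons]
        exact List.mem_cons_of_mem _ q2.start_mem_support
      rwa [SimpleGraph.Walk.support_reverse, List.mem_reverse] at h1
    have hbq : b ∈ q.support := q.start_mem_support
    have hpub : p u = b := hmaxadj u b hub (hmax' b (hqsub b hbq))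
    have hpua : p u = a := hmaxadj u a hua (hmax' a (hqsub a haq))
    have hab : a = b := by rw [← hpua, hpub]
    have hedge : s(u, a) ∈ q.edges := by
      have h1 : s(u, a) ∈ q.reverse.edges := by
        rw [hq2, SimpleGraph.Walk.edges_cons]
        exact List.mem_cons_self
      rwa [SimpleGraph.Walk.edges_reverse, List.mem_reverse] at h1
    rw [hab] at hedge
    exact hnedge hedge
  refine ⟨T, hTG, ⟨hconn, hacyc⟩, ?_⟩
  intro v hv1 hv2
  have hset : {w | T.Adj v w} = {p v} := by
    ext w
    simp only [Set.mem_setOf_eq, Set.mem_singleton_iff]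
    constructor
    · intro h
      rcases h with ⟨_, h⟩ | ⟨hw, h⟩
      · exact h.symm
      · exfalso
        have h1 := hpr w hw
        rw [h] at h1
        have h2 : r v = 2 := by simp [r, hv1, hv2]
        have h3 := hr2 w
        omega
    · rintro rfl
      exact Or.inl ⟨hv1, rfl⟩
  rw [hset, Set.ncard_singleton]

/-- If some vertex x satisfies that every vertex has at least αn neighbors in N(x),
then G has a spanning tree with at least n − (2/α)·log n leaves. -/
theorem stmt6 {V : Type*} [Fintype V] (α : ℝ) (hα0 : 0 < α) (hα1 : α ≤ 1)
    (G : SimpleGraph V)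
    (hn : (12 / α ^ 2) * Real.log (6 / α ^ 2) ≤ (Fintype.card V : ℝ))
    (hx : ∃ x : V, ∀ v : V, α * (Fintype.card V : ℝ) ≤ (({w | G.Adj x w} ∩ {w | G.Adj v w}).ncard : ℝ)) :
    ∃ T : SimpleGraph V, T ≤ G ∧ T.IsTree ∧
      (Fintype.card V : ℝ) - (2 / α) * Real.log (Fintype.card V) ≤
        ({v : V | {w | T.Adj v w}.ncard = 1}.ncard : ℝ) := by
  classical
  obtain ⟨x, hx⟩ := hx
  have hxV : Nonempty V := ⟨x⟩
  set n := Fintype.card V with hn_def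
  have hn0 : 0 < n := Fintype.card_pos
  have hnR : (0:ℝ) < n := by exact_mod_cast hn0
  have hα2 : (0:ℝ) < α ^ 2 := by positivity
  have hα21 : α ^ 2 ≤ 1 := by nlinarith
  have h6 : (6:ℝ) ≤ 6 / α ^ 2 := by rw [le_div_iff₀ hα2]; nlinarith
  have hlog6 : 1 ≤ Real.log (6 / α ^ 2) := by
    rw [Real.le_log_iff_exp_le (by linarith)]
    have := Real.exp_one_lt_d9
    linarith
  have h12 : (12:ℝ) ≤ 12 / α ^ 2 := by rw [le_div_iff₀ hα2]; nlinarith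
  have hn12 : (12:ℝ) ≤ n := by
    calc (12:ℝ) = 12 * 1 := by ring
    _ ≤ (12 / α^2) * Real.log (6/α^2) :=
        mul_le_mul h12 hlog6 (by norm_num) (by linarith)
    _ ≤ n := hn
  have hlogn : 2 ≤ Real.log n := by
    rw [Real.le_log_iff_exp_le hnR]
    have h := Real.exp_one_lt_d9
    have h2 : Real.exp 2 = Real.exp 1 * Real.exp 1 := by
      rw [← Real.exp_add]; norm_num
    nlinarith [Real.exp_pos 1]
  have hdeg : ∀ v : V, α * (n : ℝ) ≤
      ((Finset.univ.filter fun w => G.Adj x w ∧ G.Adj v w).card : ℝ) := by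
    intro v
    have hset : ({w | G.Adj x w} ∩ {w | G.Adj v w}) =
        ↑(Finset.univ.filter fun w => G.Adj x w ∧ G.Adj v w) := by
      ext w; simp [Set.mem_setOf_eq]
    have h := hx v
    rwa [hset, Set.ncard_coe_finset] at h
  -- greedy covering
  have greedy : ∀ k : ℕ, ∃ S : Finset V, (∀ s ∈ S, G.Adj x s) ∧ S.card ≤ k ∧
      (((Finset.univ.filter fun v => ∀ s ∈ S, ¬ G.Adj s v).card : ℝ))
        ≤ (n : ℝ) * (1 - α) ^ k := by
    intro k
    induction k with
    | zero =>
      refine ⟨∅, by simp, le_refl _, ?_⟩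
      simp only [pow_zero, mul_one]
      have h := Finset.card_filter_le (Finset.univ : Finset V)
        (fun v => ∀ s ∈ (∅ : Finset V), ¬ G.Adj s v)
      rw [Finset.card_univ] at h
      exact_mod_cast h
    | succ k ih =>
      obtain ⟨S, hS1, hS2, hS3⟩ := ih
      set U := Finset.univ.filter (fun v => ∀ s ∈ S, ¬ G.Adj s v) with hU
      by_cases hUe : U = ∅
      · refine ⟨S, hS1, hS2.trans (Nat.le_succ k), ?_⟩
        rw [← hU, hUe]
        simp only [Finset.card_empty, Nat.cast_zero]
        have h1 : (0:ℝ) ≤ 1 - α := by linarith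
        positivity
      · have hUne : U.Nonempty := Finset.nonempty_iff_ne_empty.mpr hUe
        have swap : ∑ v ∈ U, ((Finset.univ.filter fun w => G.Adj x w ∧ G.Adj v w).card) =
            ∑ w ∈ Finset.univ.filter (fun w => G.Adj x w), (U.filter fun v => G.Adj w v).card := by
          simp only [Finset.card_filter]
          rw [Finset.sum_comm]
          rw [Finset.sum_filter]
          refine Finset.sum_congr rfl fun w _ => ?_
          by_cases hxw : G.Adj x w
          · simp only [hxw, true_and, if_true]
            refine Finset.sum_congr rfl fun v _ => ?_
            rw [G.adj_comm]
          · simp [hxw]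
        have key : α * (n : ℝ) * U.card ≤
            ∑ w ∈ Finset.univ.filter (fun w => G.Adj x w),
              ((U.filter fun v => G.Adj w v).card : ℝ) := by
          have h1 : ∑ v ∈ U, (α * (n:ℝ)) ≤
              ∑ v ∈ U, ((Finset.univ.filter fun w => G.Adj x w ∧ G.Adj v w).card : ℝ) :=
            Finset.sum_le_sum fun v _ => hdeg v
          rw [Finset.sum_const, nsmul_eq_mul] at h1
          calc α * (n:ℝ) * U.card = U.card * (α * n) := by ring
          _ ≤ ∑ v ∈ U, ((Finset.univ.filter fun w => G.Adj x w ∧ G.Adj v w).card : ℝ) := h1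
          _ = ((∑ v ∈ U, (Finset.univ.filter fun w => G.Adj x w ∧ G.Adj v w).card : ℕ) : ℝ) := by
              push_cast; ring
          _ = _ := by rw [swap]; push_cast; ring
        have pig : ∃ w ∈ Finset.univ.filter (fun w => G.Adj x w),
            α * (U.card : ℝ) ≤ ((U.filter fun v => G.Adj w v).card : ℝ) := by
          by_contra hcon
          push_neg at hcon
          have hUpos : (0:ℝ) < U.card := by exact_mod_cast hUne.card_pos
          have hpos : 0 < α * (n:ℝ) * U.card := by positivity
          rcases Finset.eq_empty_or_nonempty (Finset.univ.filter (fun w => G.Adj x w)) with he | hne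
          · rw [he, Finset.sum_empty] at key; linarith
          · have hlt := Finset.sum_lt_sum_of_nonempty hne hcon
            rw [Finset.sum_const, nsmul_eq_mul] at hlt
            have hcard : ((Finset.univ.filter (fun w => G.Adj x w)).card : ℝ) ≤ (n:ℝ) := by
              have h := Finset.card_filter_le (Finset.univ : Finset V) (fun w => G.Adj x w)
              rw [Finset.card_univ] at h
              exact_mod_cast h
            have hαU : 0 < α * (U.card : ℝ) := by positivity
            nlinarith [key]
        obtain ⟨w, hwmem, hwcov⟩ := pig
        refine ⟨insert w S, ?_, ?_, ?_⟩
        · intro s hs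
          rcases Finset.mem_insert.mp hs with rfl | hs
          · exact (Finset.mem_filter.mp hwmem).2
          · exact hS1 s hs
        · exact (Finset.card_insert_le _ _).trans (by omega)
        · have hU' : Finset.univ.filter (fun v => ∀ s ∈ insert w S, ¬ G.Adj s v)
              = U.filter (fun v => ¬ G.Adj w v) := by
            ext v
            simp only [hU, Finset.mem_filter, Finset.mem_univ, true_and, Finset.mem_insert]
            constructor
            · intro h
              exact ⟨fun s hs => h s (Or.inr hs), h w (Or.inl rfl)⟩
            · rintro ⟨h1, h2⟩ s hs
              rcases hs with rfl | hs
              · exact h2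
              · exact h1 s hs
          rw [hU']
          have hsplit := Finset.card_filter_add_card_filter_not
            (s := U) (p := fun v => G.Adj w v)
          have hfle := Finset.card_filter_le U (fun v => G.Adj w v)
          have hcast : ((U.filter fun v => ¬ G.Adj w v).card : ℝ)
              = (U.card : ℝ) - ((U.filter fun v => G.Adj w v).card : ℝ) := by
            have : (U.filter fun v => ¬ G.Adj w v).card
                = U.card - (U.filter fun v => G.Adj w v).card := by omega
            rw [this]
            push_cast [Nat.cast_sub hfle]
            ring
          have h1α : (0:ℝ) ≤ 1 - α := by linarith
          calc ((U.filter fun v => ¬ G.Adj w v).card : ℝ)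
              = (U.card : ℝ) - ((U.filter fun v => G.Adj w v).card : ℝ) := hcast
          _ ≤ (U.card : ℝ) - α * U.card := by linarith
          _ = (1 - α) * U.card := by ring
          _ ≤ (1 - α) * ((n:ℝ) * (1-α)^k) := by
              apply mul_le_mul_of_nonneg_left _ h1α
              exact hS3
          _ = (n:ℝ) * (1-α)^(k+1) := by ring
  set k := ⌊Real.log n / α⌋₊ + 1 with hk
  obtain ⟨S, hS1, hS2, hS3⟩ := greedy k
  have hexp : (n:ℝ) * (1 - α) ^ k < 1 := by
    have h1 : (1 - α : ℝ) ≤ Real.exp (-α) := by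
      have := Real.add_one_le_exp (-α); linarith
    have h2 : (1-α:ℝ)^k ≤ Real.exp (-α)^k :=
      pow_le_pow_left₀ (by linarith) h1 k
    have h2' : Real.exp (-α)^k = Real.exp ((k:ℝ) * (-α)) := by
      rw [← Real.exp_nat_mul]
    have h3 : Real.log n < α * k := by
      have h4 : Real.log n / α < (k:ℝ) := by
        have h5 := Nat.lt_floor_add_one (Real.log n / α)
        rw [hk]; push_cast; linarith
      rw [div_lt_iff₀ hα0] at h4
      linarith [h4]
    have h5 : Real.exp ((k:ℝ) * (-α)) < Real.exp (- Real.log n) := by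
      apply Real.exp_lt_exp.mpr
      nlinarith
    have h6 : Real.exp (- Real.log n) = 1 / (n:ℝ) := by
      rw [Real.exp_neg, Real.exp_log hnR, one_div]
    calc (n:ℝ) * (1-α)^k ≤ (n:ℝ) * Real.exp ((k:ℝ) * (-α)) := by
          apply mul_le_mul_of_nonneg_left _ hnR.le
          rw [← h2']; exact h2
    _ < (n:ℝ) * (1 / n) := by
          apply mul_lt_mul_of_pos_left _ hnR
          rw [← h6]; exact h5
    _ = 1 := by field_simp
  have hUempty : (Finset.univ.filter fun v => ∀ s ∈ S, ¬ G.Adj s v) = ∅ := by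
    have hlt := hS3.trans_lt hexp
    have h0 : (Finset.univ.filter fun v => ∀ s ∈ S, ¬ G.Adj s v).card = 0 := by
      by_contra h
      have h1 : 1 ≤ (Finset.univ.filter fun v => ∀ s ∈ S, ¬ G.Adj s v).card := by omega
      have : (1:ℝ) ≤ ((Finset.univ.filter fun v => ∀ s ∈ S, ¬ G.Adj s v).card : ℝ) := by
        exact_mod_cast h1
      linarith
    exact Finset.card_eq_zero.mp h0
  have hcov : ∀ v, v ≠ x → v ∉ S → ∃ s ∈ S, G.Adj s v := by
    intro v _ _
    by_contra h
    push_neg at h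
    have hv : v ∈ (Finset.univ.filter fun v => ∀ s ∈ S, ¬ G.Adj s v) := by
      simp only [Finset.mem_filter, Finset.mem_univ, true_and]
      exact h
    rw [hUempty] at hv
    exact absurd hv (Finset.notMem_empty v)
  obtain ⟨T, hTG, hTree, hleaf⟩ := tree_of_parent G x S hS1 hcov
  refine ⟨T, hTG, hTree, ?_⟩
  have hsub : ((insert x S)ᶜ : Finset V) ⊆ {v : V | {w | T.Adj v w}.ncard = 1}.toFinset := by
    intro v hv
    rw [Finset.mem_compl, Finset.mem_insert] at hv
    push_neg at hv
    rw [Set.mem_toFinset]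
    exact hleaf v hv.1 hv.2
  have hcard1 : n - (insert x S).card ≤ {v : V | {w | T.Adj v w}.ncard = 1}.toFinset.card := by
    have h := Finset.card_le_card hsub
    rwa [Finset.card_compl] at h
  have hins : (insert x S).card ≤ k + 1 := (Finset.card_insert_le _ _).trans (by omega)
  have hinsn : (insert x S).card ≤ n := hn_def ▸ Finset.card_le_univ (insert x S)
  have hncard : ({v : V | {w | T.Adj v w}.ncard = 1}).ncard
      = ({v : V | {w | T.Adj v w}.ncard = 1}).toFinset.card :=
    Set.ncard_eq_toFinset_card' _
  rw [hncard]
  have hkle : (k:ℝ) + 1 ≤ (2/α) * Real.log n := by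
    have hlogpos : (0:ℝ) ≤ Real.log n / α := by positivity
    have h1 : (⌊Real.log n / α⌋₊ : ℝ) ≤ Real.log n / α := Nat.floor_le hlogpos
    have h2 : 2 ≤ Real.log n / α := by
      rw [le_div_iff₀ hα0]; nlinarith
    have h3 : (k:ℝ) + 1 = (⌊Real.log n / α⌋₊ : ℝ) + 2 := by
      rw [hk]; push_cast; ring
    calc (k:ℝ) + 1 = (⌊Real.log n / α⌋₊ : ℝ) + 2 := h3
    _ ≤ Real.log n / α + Real.log n / α := by linarith
    _ = (2/α) * Real.log n := by ring
  have hc : (n:ℝ) - ((insert x S).card : ℝ)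
      ≤ (({v : V | {w | T.Adj v w}.ncard = 1}).toFinset.card : ℝ) := by
    have h := hcard1
    have h2 : ((n - (insert x S).card : ℕ) : ℝ)
        ≤ (({v : V | {w | T.Adj v w}.ncard = 1}).toFinset.card : ℝ) := by
      exact_mod_cast h
    rwa [Nat.cast_sub hinsn] at h2
  have hiR : ((insert x S).card : ℝ) ≤ (k:ℝ) + 1 := by exact_mod_cast hins
  linarith
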